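/- Let k ≥ 3 be an integer, N ≥ 4 an integer, and 0 < δ < 1/4. Let f be of class C^k on [N, 2N] such that there exist λ_k > 0 and c_k ≥ 1 with λ_k ≤ |f^{(k)}(x)| ≤ c_k·λ_k for all x ∈ [N, 2N]. Let P be a real polynomial of degree < k, let C_δ = {(x,y) ∈ [N,2N] × ℝ : |y − f(x)| < δ}, and let C_P = {(x,y) ∈ ℝ² : y = P(x)} be the graph of P. Then the set C_δ ∩ C_P has at most k connected components. -/

import Mathlib

open Set

private lemma aux_poly_contDiff (p : Polynomial ℝ) (n : ℕ) :
    ContDiff ℝ n fun x => p.eval x := by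
  induction p using Polynomial.induction_on' with
  | add p q hp hq => simpa [Polynomial.eval_add] using hp.add hq
  | monomial k a =>
      simpa [Polynomial.eval_monomial] using
        (contDiff_const (c := a)).mul (contDiff_id.pow k)

private lemma aux_poly_iter (p : Polynomial ℝ) (n : ℕ) (a b : ℝ) (hab : a < b) :
    ∀ x ∈ Icc a b, iteratedDerivWithin n (fun y => p.eval y) (Icc a b) x
      = (Polynomial.derivative^[n] p).eval x := by
  induction n generalizing p with
  | zero => intro x hx; simp
  | succ n ih =>
      intro x hx
      have hud : UniqueDiffOn ℝ (Icc a b) := uniqueDiffOn_Icc hab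
      rw [iteratedDerivWithin_succ']
      have hEq : Set.EqOn (derivWithin (fun y => p.eval y) (Icc a b))
          (fun y => (Polynomial.derivative p).eval y) (Icc a b) := by
        intro y hy
        exact Polynomial.derivWithin (p := p) (hud y hy)
      have := iteratedDerivWithin_congr (n := n) hEq hx
      rw [this, ih (Polynomial.derivative p) x hx, Function.iterate_succ_apply]

private lemma aux_no_zeros : ∀ (n : ℕ) (h : ℝ → ℝ) (a b : ℝ), a < b →
    ContDiffOn ℝ n h (Icc a b) →
    (∀ x ∈ Icc a b, iteratedDerivWithin n h (Icc a b) x ≠ 0) →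
    ∀ x : Fin (n + 1) → ℝ, StrictMono x → (∀ i, x i ∈ Icc a b) →
      (∀ i, h (x i) = 0) → False := by
  intro n
  induction n with
  | zero =>
      intro h a b hab hcd hne x hmono hmem hz
      have := hne (x 0) (hmem 0)
      rw [iteratedDerivWithin_zero] at this
      exact this (hz 0)
  | succ n ih =>
      intro h a b hab hcd hne x hmono hmem hz
      have hud : UniqueDiffOn ℝ (Icc a b) := uniqueDiffOn_Icc hab
      have H : ∀ i : Fin (n + 1), ∃ ci,
          ci ∈ Ioo (x i.castSucc) (x i.succ) ∧ derivWithin h (Icc a b) ci = 0 := by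
        intro i
        have hlt : x i.castSucc < x i.succ := hmono (Fin.castSucc_lt_succ (i := i))
        have hcont : ContinuousOn h (Icc (x i.castSucc) (x i.succ)) :=
          hcd.continuousOn.mono (Icc_subset_Icc (hmem i.castSucc).1 (hmem i.succ).2)
        obtain ⟨ci, hci, hci0⟩ :=
          exists_deriv_eq_zero hlt hcont ((hz i.castSucc).trans (hz i.succ).symm)
        refine ⟨ci, hci, ?_⟩
        have hnb : Icc a b ∈ nhds ci :=
          Icc_mem_nhds (lt_of_le_of_lt (hmem i.castSucc).1 hci.1)
            (lt_of_lt_of_le hci.2 (hmem i.succ).2)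
        rw [derivWithin_of_mem_nhds hnb]
        exact hci0
      choose y hy hy0 using H
      have hymono : StrictMono y := by
        refine Fin.strictMono_iff_lt_succ.2 fun i => ?_
        have h1 : y i.castSucc < x i.castSucc.succ := (hy i.castSucc).2
        have h2 : x i.succ.castSucc < y i.succ := (hy i.succ).1
        rw [Fin.succ_castSucc] at h1
        exact h1.trans h2
      refine ih (derivWithin h (Icc a b)) a b hab
        (hcd.derivWithin hud (by exact_mod_cast le_refl (n + 1 : ℕ∞)))
        (fun z hzm => ?_) y hymono
        (fun i => Icc_subset_Icc (hmem i.castSucc).1 (hmem i.succ).2 (Ioo_subset_Icc_self (hy i)))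
        hy0
      rw [← iteratedDerivWithin_succ']
      exact hne z hzm

theorem stmt_13 (k N : ℕ) (hk : 3 ≤ k) (hN : 4 ≤ N)
    (δ : ℝ) (hδ0 : 0 < δ) (hδ1 : δ < 1/4)
    (f : ℝ → ℝ) (lam c : ℝ) (hlam : 0 < lam) (hc : 1 ≤ c)
    (hf : ContDiffOn ℝ k f (Set.Icc (N:ℝ) (2*N)))
    (hder : ∀ x ∈ Set.Icc (N:ℝ) (2*N),
      lam ≤ |iteratedDerivWithin k f (Set.Icc (N:ℝ) (2*N)) x| ∧
      |iteratedDerivWithin k f (Set.Icc (N:ℝ) (2*N)) x| ≤ c * lam)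
    (P : Polynomial ℝ) (hdeg : P.degree < (k : WithBot ℕ)) :
    ∃ C : Finset (Set (ℝ × ℝ)), C.card ≤ k ∧
      ∀ p ∈ {q : ℝ × ℝ | q.1 ∈ Set.Icc (N:ℝ) (2*N) ∧ |q.2 - f q.1| < δ ∧ q.2 = P.eval q.1},
        connectedComponentIn
          {q : ℝ × ℝ | q.1 ∈ Set.Icc (N:ℝ) (2*N) ∧ |q.2 - f q.1| < δ ∧ q.2 = P.eval q.1} p ∈ C := by
  classical
  obtain ⟨m, rfl⟩ : ∃ m, k = m + 1 := ⟨k - 1, by omega⟩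
  set I : Set ℝ := Set.Icc (N:ℝ) (2*N) with hI
  have hN4 : (4:ℝ) ≤ (N:ℝ) := by exact_mod_cast hN
  have hab : (N:ℝ) < 2*N := by linarith
  have hud : UniqueDiffOn ℝ I := uniqueDiffOn_Icc hab
  set g : ℝ → ℝ := fun x => P.eval x - f x with hgdef
  have hg : ContDiffOn ℝ (m+1 : ℕ) g I :=
    ((aux_poly_contDiff P (m+1)).contDiffOn).sub hf
  -- the (m+1)-st derivative of g is nonzero on I
  have hgk : ∀ x ∈ I, iteratedDerivWithin (m+1) g I x ≠ 0 := by
    intro x hx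
    have hnd : P.natDegree < m + 1 := by
      rcases eq_or_ne P 0 with rfl | hP
      · simpa using Nat.lt_of_lt_of_le (by norm_num) hk
      · exact (Polynomial.natDegree_lt_iff_degree_lt hP).2 hdeg
    have hPd : Polynomial.derivative^[m+1] P = 0 :=
      Polynomial.iterate_derivative_eq_zero hnd
    have hsub : iteratedDerivWithin (m+1) ((fun y => P.eval y) - f) I x
        = iteratedDerivWithin (m+1) (fun y => P.eval y) I x
          - iteratedDerivWithin (m+1) f I x :=
      iteratedDerivWithin_sub hx hud ((aux_poly_contDiff P (m+1)).contDiffOn x hx) (hf x hx)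
    have hgf : g = (fun y => P.eval y) - f := rfl
    have hPz : iteratedDerivWithin (m+1) (fun y => P.eval y) I x = 0 := by
      rw [aux_poly_iter P (m+1) _ _ hab x hx, hPd]
      simp
    have habs : lam ≤ |iteratedDerivWithin (m+1) g I x| := by
      rw [hgf, hsub, hPz, zero_sub, abs_neg]
      exact (hder x hx).1
    intro h0
    rw [h0] at habs
    simp only [abs_zero] at habs
    linarith
  -- the 1-dimensional set
  set T : Set ℝ := {x : ℝ | x ∈ I ∧ |P.eval x - f x| < δ} with hT
  -- gap lemma: between distinct components there is a zero of g'
  have key : ∀ p q : ℝ, p ∈ T → q ∈ T → p < q →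
      connectedComponentIn T p ≠ connectedComponentIn T q →
      ∃ M ∈ Ioo p q, derivWithin g I M = 0 := by
    intro p q hp hq hpq hne
    have hsubI : Icc p q ⊆ I := Icc_subset_Icc hp.1.1 hq.1.2
    have hsub : ¬ Icc p q ⊆ T := by
      intro hsubT
      have h1 : Icc p q ⊆ connectedComponentIn T p :=
        isPreconnected_Icc.subset_connectedComponentIn (left_mem_Icc.2 hpq.le) hsubT
      exact hne (connectedComponentIn_eq (h1 (right_mem_Icc.2 hpq.le)))
    obtain ⟨z, hz, hzT⟩ := Set.not_subset.1 hsub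
    have hzI : z ∈ I := hsubI hz
    have hzg : δ ≤ |g z| := by
      by_contra hlt
      exact hzT ⟨hzI, lt_of_not_ge hlt⟩
    have hcont : ContinuousOn (fun x => |g x|) (Icc p q) :=
      (hg.continuousOn.mono hsubI).abs
    obtain ⟨M, hM, hmax⟩ :=
      isCompact_Icc.exists_isMaxOn (nonempty_Icc.2 hpq.le) hcont
    have hMδ : δ ≤ |g M| := le_trans hzg (hmax hz)
    have hMp : M ≠ p := by
      intro hMP; rw [hMP] at hMδ
      exact absurd hp.2 (not_lt.2 hMδ)
    have hMq : M ≠ q := by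
      intro hMP; rw [hMP] at hMδ
      exact absurd hq.2 (not_lt.2 hMδ)
    have hMpq : M ∈ Ioo p q :=
      ⟨lt_of_le_of_ne hM.1 (Ne.symm hMp), lt_of_le_of_ne hM.2 hMq⟩
    have hnb : Icc p q ∈ nhds M := Icc_mem_nhds hMpq.1 hMpq.2
    have hInb : I ∈ nhds M := Filter.mem_of_superset hnb hsubI
    have hderiv0 : deriv g M = 0 := by
      rcases lt_trichotomy (g M) 0 with hneg | hzero | hpos
      · have hmin : IsMinOn g (Icc p q) M := by
          intro x hx
          have h1 : |g x| ≤ |g M| := hmax hx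
          have h2 : |g M| = -(g M) := abs_of_neg hneg
          have h3 : -|g x| ≤ g x := neg_abs_le _
          simp only [Set.mem_setOf_eq]
          linarith
        exact (hmin.isLocalMin hnb).deriv_eq_zero
      · rw [hzero] at hMδ; simp at hMδ; linarith
      · have hmaxg : IsMaxOn g (Icc p q) M := by
          intro x hx
          have h1 : |g x| ≤ |g M| := hmax hx
          have h2 : |g M| = g M := abs_of_pos hpos
          have h3 : g x ≤ |g x| := le_abs_self _
          simp only [Set.mem_setOf_eq]
          linarith
        exact (hmaxg.isLocalMax hnb).deriv_eq_zero
    exact ⟨M, hMpq, by rw [derivWithin_of_mem_nhds hInb]; exact hderiv0⟩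
  -- no m+2 points in pairwise distinct components
  have nosep : ∀ p' : Fin (m + 2) → ℝ, StrictMono p' → (∀ i, p' i ∈ T) →
      (∀ i j, i ≠ j →
        connectedComponentIn T (p' i) ≠ connectedComponentIn T (p' j)) → False := by
    intro p' hmono hmem hdist
    have HM : ∀ i : Fin (m + 1), ∃ M ∈ Ioo (p' i.castSucc) (p' i.succ),
        derivWithin g I M = 0 := fun i =>
      key _ _ (hmem _) (hmem _) (hmono (Fin.castSucc_lt_succ (i := i)))
        (hdist _ _ (Fin.castSucc_lt_succ (i := i)).ne)
    choose M hMIoo hMzero using HM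
    have hMmono : StrictMono M := by
      refine Fin.strictMono_iff_lt_succ.2 fun i => ?_
      have h1 : M i.castSucc < p' i.castSucc.succ := (hMIoo i.castSucc).2
      have h2 : p' i.succ.castSucc < M i.succ := (hMIoo i.succ).1
      rw [Fin.succ_castSucc] at h1
      exact h1.trans h2
    refine aux_no_zeros m (derivWithin g I) (N:ℝ) (2*N) hab
      (hg.derivWithin hud (by exact_mod_cast le_refl (m + 1 : ℕ∞)))
      (fun z hzm => ?_) M hMmono
      (fun i => Icc_subset_Icc (hmem i.castSucc).1.1 (hmem i.succ).1.2
        (Ioo_subset_Icc_self (hMIoo i)))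
      hMzero
    rw [← iteratedDerivWithin_succ']
    exact hgk z hzm
  -- the set of components of T is finite with at most m+1 elements
  have hcard : ∀ F : Finset (Set ℝ), ↑F ⊆ connectedComponentIn T '' T →
      F.card ≤ m + 1 := by
    intro F hF
    by_contra hlt
    push_neg at hlt
    obtain ⟨F', hF'sub, hF'card⟩ := Finset.exists_subset_card_eq (show m + 2 ≤ F.card by omega)
    have hrep' : ∀ c : {c // c ∈ F'}, ∃ x, x ∈ T ∧ connectedComponentIn T x = c.1 :=
      fun c => by
        obtain ⟨x, hx, hxc⟩ := hF (hF'sub c.2)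
        exact ⟨x, hx, hxc⟩
    choose r hrT hrc using hrep'
    have hrinj : Function.Injective r := by
      intro c1 c2 hr
      have : (c1 : Set ℝ) = c2 := by rw [← hrc c1, ← hrc c2, hr]
      exact Subtype.ext this
    set s' : Finset ℝ := F'.attach.image r with hs'
    have hcards : s'.card = m + 2 := by
      rw [hs', Finset.card_image_of_injective _ hrinj, Finset.card_attach, hF'card]
    set p' : Fin (m + 2) → ℝ := fun i => s'.orderEmbOfFin hcards i with hp'
    have hp'mem : ∀ i, p' i ∈ s' := fun i => s'.orderEmbOfFin_mem hcards i
    have hp'T : ∀ i, p' i ∈ T := by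
      intro i
      obtain ⟨c, _, hcr⟩ := Finset.mem_image.1 (hp'mem i)
      rw [← hcr]; exact hrT c
    have hp'c : ∀ i j, i ≠ j →
        connectedComponentIn T (p' i) ≠ connectedComponentIn T (p' j) := by
      intro i j hij hcc
      obtain ⟨ci, _, hci⟩ := Finset.mem_image.1 (hp'mem i)
      obtain ⟨cj, _, hcj⟩ := Finset.mem_image.1 (hp'mem j)
      have h1 : (ci : Set ℝ) = cj := by
        rw [← hrc ci, ← hrc cj, hci, hcj, hcc]
      have h2 : p' i = p' j := by
        rw [← hci, ← hcj]; exact congrArg r (Subtype.ext h1)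
      exact absurd ((s'.orderEmbOfFin hcards).injective h2) hij
    exact nosep p' (fun i j hij => by
        simpa [hp'] using (s'.orderEmbOfFin hcards).strictMono hij) hp'T hp'c
  have hfin : (connectedComponentIn T '' T).Finite := by
    by_contra hinf
    obtain ⟨t, htsub, htfin, htcard⟩ :=
      Set.Infinite.exists_subset_ncard_eq hinf (m + 2)
    have h1 := hcard htfin.toFinset (by simpa using htsub)
    rw [Set.ncard_eq_toFinset_card t htfin] at htcard
    omega
  have hfcard : hfin.toFinset.card ≤ m + 1 := hcard hfin.toFinset (by simp)
  -- transfer to the plane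
  set S : Set (ℝ × ℝ) :=
    {q : ℝ × ℝ | q.1 ∈ Set.Icc (N:ℝ) (2*N) ∧ |q.2 - f q.1| < δ ∧ q.2 = P.eval q.1} with hS
  set φ : ℝ → ℝ × ℝ := fun x => (x, P.eval x) with hφ
  have hφcont : Continuous φ := continuous_id.prodMk P.continuous
  have hSsub : ∀ q : ℝ × ℝ, q ∈ S → q.1 ∈ T := by
    intro q hq
    exact ⟨hq.1, by rw [← hq.2.2]; exact hq.2.1⟩
  have hcomp : ∀ p : ℝ × ℝ, p ∈ S →
      connectedComponentIn S p = φ '' connectedComponentIn T p.1 := by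
    intro p hp
    have hp1T : p.1 ∈ T := hSsub p hp
    have hpφ : φ p.1 = p := Prod.ext rfl hp.2.2.symm
    apply Set.Subset.antisymm
    · have h1 : Prod.fst '' connectedComponentIn S p ⊆ connectedComponentIn T p.1 := by
        apply IsPreconnected.subset_connectedComponentIn
        · exact isPreconnected_connectedComponentIn.image _ continuous_fst.continuousOn
        · exact ⟨p, mem_connectedComponentIn hp, rfl⟩
        · rintro _ ⟨q', hq', rfl⟩
          exact hSsub q' (connectedComponentIn_subset S p hq')
      intro q hq
      have hqS : q ∈ S := connectedComponentIn_subset S p hq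
      refine ⟨q.1, h1 ⟨q, hq, rfl⟩, ?_⟩
      exact Prod.ext rfl hqS.2.2.symm
    · apply IsPreconnected.subset_connectedComponentIn
      · exact isPreconnected_connectedComponentIn.image _ hφcont.continuousOn
      · exact ⟨p.1, mem_connectedComponentIn hp1T, hpφ⟩
      · rintro _ ⟨x, hx, rfl⟩
        have hxT : x ∈ T := connectedComponentIn_subset T p.1 hx
        exact ⟨hxT.1, by simpa using hxT.2, rfl⟩
  refine ⟨hfin.toFinset.image (Set.image φ), ?_, ?_⟩
  · exact le_trans (Finset.card_image_le) hfcard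
  · intro p hp
    rw [hcomp p hp]
    apply Finset.mem_image_of_mem
    rw [Set.Finite.mem_toFinset]
    exact ⟨p.1, hSsub p hp, rfl⟩
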